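/- arXiv:2511.03003 — 5 statements merged into one kernel-verified Lean document; each statement's English description precedes it below -/
import Mathlib

section
/- If S is a finite commutative semigroup whose extended commuting graph contains a *-left path, then the *-knit degree of S equals 1. -/
open SimpleGraph

/-- The center of a magma/semigroup: elements commuting with everything. -/
def sgCenter (S : Type*) [Mul S] : Set S := {x | ∀ y, x * y = y * x}

/-- The commuting graph of a semigroup: vertices are non-central elements,
distinct vertices adjacent iff they commute. -/
def commGraph (S : Type*) [Mul S] : SimpleGraph {x : S // x ∉ sgCenter S} where
  Adj x y := x ≠ y ∧ (x : S) * y = (y : S) * x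
  symm := ⟨fun x y ⟨h, h'⟩ => ⟨h.symm, h'.symm⟩⟩
  loopless := ⟨fun x ⟨h, _⟩ => h rfl⟩

/-- The extended commuting graph of a semigroup: vertices are all elements,
distinct vertices adjacent iff they commute. -/
def extCommGraph (S : Type*) [Mul S] : SimpleGraph S where
  Adj x y := x ≠ y ∧ x * y = y * x
  symm := ⟨fun x y ⟨h, h'⟩ => ⟨h.symm, h'.symm⟩⟩
  loopless := ⟨fun x ⟨h, _⟩ => h rfl⟩

/-- The graph join of two graphs on disjoint vertex sets. -/
def graphJoin {V W : Type*} (G : SimpleGraph V) (H : SimpleGraph W) :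
    SimpleGraph (V ⊕ W) where
  Adj x y := match x, y with
    | .inl a, .inl b => G.Adj a b
    | .inr a, .inr b => H.Adj a b
    | .inl _, .inr _ => True
    | .inr _, .inl _ => True
  symm := by constructor; rintro (a|a) (b|b) h <;> simp_all [SimpleGraph.Adj.symm]
  loopless := by constructor; rintro (a|a) h; exacts [G.loopless.irrefl a h, H.loopless.irrefl a h]

/-- The graph join of a family of graphs on disjoint vertex sets. -/
def graphJoinFam {ι : Type*} {V : ι → Type*} (G : ∀ i, SimpleGraph (V i)) :
    SimpleGraph (Σ i, V i) where
  Adj x y := x.1 ≠ y.1 ∨ ∃ a b : V x.1, (G x.1).Adj a b ∧ x = ⟨x.1, a⟩ ∧ y = ⟨x.1, b⟩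
  symm := by
    constructor
    rintro ⟨i, a⟩ ⟨j, b⟩ (h | ⟨a', b', hadj, h1, h2⟩)
    · exact Or.inl h.symm
    · cases h1; cases h2
      exact Or.inr ⟨b', a, hadj.symm, rfl, rfl⟩
  loopless := by
    constructor
    rintro ⟨i, a⟩ (h | ⟨a', b', hadj, h1, h2⟩)
    · exact h rfl
    · cases h1
      cases h2
      exact (G i).loopless.irrefl _ hadj

/-- The strong product of two simple graphs. -/
def strongProd {V W : Type*} (G : SimpleGraph V) (H : SimpleGraph W) :
    SimpleGraph (V × W) where
  Adj x y := x ≠ y ∧ (x.1 = y.1 ∨ G.Adj x.1 y.1) ∧ (x.2 = y.2 ∨ H.Adj x.2 y.2)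
  symm := ⟨fun x y ⟨h, h1, h2⟩ =>
    ⟨h.symm, h1.imp Eq.symm (fun h => G.symm.symm _ _ h), h2.imp Eq.symm (fun h => H.symm.symm _ _ h)⟩⟩
  loopless := ⟨fun x ⟨h, _⟩ => h rfl⟩

/-- The strong product of a family of simple graphs. -/
def strongProdFam {ι : Type*} {V : ι → Type*} (G : ∀ i, SimpleGraph (V i)) :
    SimpleGraph (∀ i, V i) where
  Adj x y := x ≠ y ∧ ∀ i, x i = y i ∨ (G i).Adj (x i) (y i)
  symm := ⟨fun x y ⟨h, h'⟩ => ⟨h.symm, fun i => (h' i).imp Eq.symm (fun h => (G i).symm.symm _ _ h)⟩⟩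
  loopless := ⟨fun x ⟨h, _⟩ => h rfl⟩

/-- `p` is a left path in the commuting graph of `S`. -/
def IsLeftPath {S : Type*} [Mul S] {u v : {x : S // x ∉ sgCenter S}}
    (p : (commGraph S).Walk u v) : Prop :=
  p.IsPath ∧ u ≠ v ∧ ∀ w ∈ p.support, (u : S) * (w : S) = (v : S) * (w : S)

/-- The commuting graph of `S` contains a left path. -/
def HasLeftPath (S : Type*) [Mul S] : Prop :=
  ∃ (u v : {x : S // x ∉ sgCenter S}) (p : (commGraph S).Walk u v), IsLeftPath p

/-- The knit degree of `S`: the length of a shortest left path in its commuting graph. -/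
noncomputable def knitDegree (S : Type*) [Mul S] : ℕ :=
  sInf {m | ∃ (u v : {x : S // x ∉ sgCenter S}) (p : (commGraph S).Walk u v),
    IsLeftPath p ∧ p.length = m}

/-- `p` is a *-left path in the extended commuting graph of `S`. -/
def IsStarLeftPath {S : Type*} [Mul S] {u v : S}
    (p : (extCommGraph S).Walk u v) : Prop :=
  p.IsPath ∧ u ≠ v ∧ ∀ w ∈ p.support, u * w = v * w

/-- The extended commuting graph of `S` contains a *-left path. -/
def HasStarLeftPath (S : Type*) [Mul S] : Prop :=
  ∃ (u v : S) (p : (extCommGraph S).Walk u v), IsStarLeftPath p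

/-- The *-knit degree of `S`. -/
noncomputable def starKnitDegree (S : Type*) [Mul S] : ℕ :=
  sInf {m | ∃ (u v : S) (p : (extCommGraph S).Walk u v), IsStarLeftPath p ∧ p.length = m}

/-- The zero-union of a family of semigroups: their disjoint union plus a new zero. -/
def ZeroUnion {n : ℕ} (S : Fin n → Type*) : Type _ := Option (Σ i, S i)

instance {n : ℕ} (S : Fin n → Type*) [∀ i, Mul (S i)] : Mul (ZeroUnion S) where
  mul x y := match x, y with
    | some ⟨i, a⟩, some ⟨j, b⟩ =>
      if h : j = i then some ⟨i, a * (h ▸ b)⟩ else none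
    | _, _ => none

theorem starKnitDegree_eq_one_of_comm {S : Type*} [Semigroup S] [Fintype S]
    (hc : ∀ x y : S, x * y = y * x) (h : HasStarLeftPath S) :
    starKnitDegree S = 1 := by
  obtain ⟨u, v, p, hpath, hne, hw⟩ := h
  have hadj : (extCommGraph S).Adj u v := show u ≠ v ∧ u * v = v * u from ⟨hne, hc u v⟩
  set q : (extCommGraph S).Walk u v := SimpleGraph.Walk.cons hadj SimpleGraph.Walk.nil with hq
  have hqpath : q.IsPath := by
    simp [hq, SimpleGraph.Walk.isPath_iff_eq_nil, hne]
  have h1 : 1 ∈ {m | ∃ (u v : S) (p : (extCommGraph S).Walk u v), IsStarLeftPath p ∧ p.length = m} := by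
    refine ⟨u, v, q, ⟨hqpath, hne, ?_⟩, rfl⟩
    intro w hwmem
    simp [hq, SimpleGraph.Walk.support_cons] at hwmem
    rcases hwmem with rfl | rfl
    · exact hw _ p.start_mem_support
    · exact hw _ p.end_mem_support
  unfold starKnitDegree
  refine le_antisymm (Nat.sInf_le h1) ?_
  rw [Nat.one_le_iff_ne_zero, Ne, Nat.sInf_eq_zero]
  rintro (⟨a, b, r, ⟨_, hab, _⟩, hlen⟩ | hempty)
  · exact hab (r.eq_of_length_eq_zero hlen)
  · exact Set.eq_empty_iff_forall_notMem.mp hempty 1 h1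
end

section
/- Let S be a finite non-commutative semigroup whose commuting graph contains left paths. If the extended commuting graph of S contains a *-left path that is not a left path of the commuting graph, then the *-knit degree of S is 1 or 2. -/
open SimpleGraph

theorem starKnitDegree_one_or_two {S : Type*} [Semigroup S] [Fintype S]
    (hnc : ¬ ∀ x y : S, x * y = y * x) (hlp : HasLeftPath S)
    (h : ∃ (u v : S) (p : (extCommGraph S).Walk u v),
      IsStarLeftPath p ∧ ∃ w ∈ p.support, w ∈ sgCenter S) :
    starKnitDegree S = 1 ∨ starKnitDegree S = 2 := by
  obtain ⟨u, v, p, ⟨hpath, huv, hsupp⟩, z, hz, hzc⟩ := h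
  have huu : u * u = v * u := hsupp u p.start_mem_support
  have huv' : u * v = v * v := hsupp v p.end_mem_support
  set T := {m | ∃ (u v : S) (p : (extCommGraph S).Walk u v),
    IsStarLeftPath p ∧ p.length = m} with hT
  have hmem : 1 ∈ T ∨ 2 ∈ T := by
    by_cases hzu : z = u
    · left
      subst hzu
      refine ⟨z, v, Walk.cons (show (extCommGraph S).Adj z v from show z ≠ v ∧ z * v = v * z from ⟨huv, hzc v⟩) Walk.nil, ⟨?_, huv, ?_⟩, rfl⟩
      · simp [Walk.isPath_def, huv]
      · intro w hw
        simp only [Walk.support_cons, Walk.support_nil, List.mem_cons,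
          List.mem_singleton, List.not_mem_nil, or_false] at hw
        rcases hw with rfl | rfl
        · exact huu
        · exact huv'
    · by_cases hzv : z = v
      · left
        subst hzv
        refine ⟨u, z, Walk.cons (show (extCommGraph S).Adj u z from show u ≠ z ∧ u * z = z * u from ⟨huv, (hzc u).symm⟩) Walk.nil, ⟨?_, huv, ?_⟩, rfl⟩
        · simp [Walk.isPath_def, huv]
        · intro w hw
          simp only [Walk.support_cons, Walk.support_nil, List.mem_cons,
            List.mem_singleton, List.not_mem_nil, or_false] at hw
          rcases hw with rfl | rfl
          · exact huu
          · exact huv'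
      · right
        refine ⟨u, v, Walk.cons (show (extCommGraph S).Adj u z from show u ≠ z ∧ u * z = z * u from ⟨Ne.symm hzu, (hzc u).symm⟩)
          (Walk.cons (show (extCommGraph S).Adj z v from show z ≠ v ∧ z * v = v * z from ⟨hzv, hzc v⟩) Walk.nil), ⟨?_, huv, ?_⟩, rfl⟩
        · simp [Walk.isPath_def, huv, hzu, hzv, Ne.symm hzu]
        · intro w hw
          simp only [Walk.support_cons, Walk.support_nil, List.mem_cons,
            List.mem_singleton, List.not_mem_nil, or_false] at hw
          rcases hw with rfl | rfl | rfl
          · exact huu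
          · exact hsupp w hz
          · exact huv'
  have hne : T.Nonempty := by rcases hmem with h1 | h2; exacts [⟨1, h1⟩, ⟨2, h2⟩]
  have h0 : 0 ∉ T := by
    rintro ⟨a, b, q, ⟨_, hab, _⟩, hlen⟩
    exact hab (q.eq_of_length_eq_zero hlen)
  have hle : sInf T ≤ 2 := by
    rcases hmem with h1 | h2
    · exact le_trans (Nat.sInf_le h1) (by norm_num)
    · exact Nat.sInf_le h2
  have hpos : sInf T ≠ 0 := fun hc => h0 (hc ▸ Nat.sInf_mem hne)
  unfold starKnitDegree
  rw [← hT]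
  omega
end

section
/- Let S be the zero-union of finite semigroups S₁, …, Sₙ with at least two of them non-commutative. Then the clique number of the commuting graph of S equals the sum of the clique numbers of the commuting graphs of the non-commutative Sᵢ. -/
open SimpleGraph

section Aux

variable {n : ℕ} {S : Fin n → Type*} [∀ i, Mul (S i)]

variable (S) in
/-- The element of the zero-union coming from component `i`. -/
def zuE (i : Fin n) (a : S i) : ZeroUnion S := some ⟨i, a⟩

variable (S) in
/-- The zero of the zero-union. -/
def zuZ : ZeroUnion S := none

lemma zuE_injective (i : Fin n) : Function.Injective (zuE S i) := by
  intro a b h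
  have h' : (some ⟨i, a⟩ : Option (Σ i, S i)) = some ⟨i, b⟩ := h
  simpa using h'

lemma zuE_ne_zuE {i j : Fin n} (h : i ≠ j) (a : S i) (b : S j) : zuE S i a ≠ zuE S j b := by
  intro hc
  have hc' : (some ⟨i, a⟩ : Option (Σ i, S i)) = some ⟨j, b⟩ := hc
  simp only [Option.some.injEq, Sigma.mk.inj_iff] at hc'
  exact h hc'.1

lemma zu_cases (x : ZeroUnion S) : x = zuZ S ∨ ∃ i a, x = zuE S i a := by
  cases x with
  | none => exact Or.inl rfl
  | some p => exact Or.inr ⟨p.1, p.2, rfl⟩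

lemma zu_mul_some_some (i j : Fin n) (a : S i) (b : S j) :
    HMul.hMul (α := ZeroUnion S) (zuE S i a) (zuE S j b)
      = if h : j = i then zuE S i (a * (h ▸ b)) else zuZ S := rfl

lemma zu_mul_same (i : Fin n) (a b : S i) :
    HMul.hMul (α := ZeroUnion S) (zuE S i a) (zuE S i b) = zuE S i (a * b) := by
  rw [zu_mul_some_some, dif_pos rfl]

lemma zu_mul_ne {i j : Fin n} (h : j ≠ i) (a : S i) (b : S j) :
    HMul.hMul (α := ZeroUnion S) (zuE S i a) (zuE S j b) = zuZ S := dif_neg h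

lemma zu_none_mul (x : ZeroUnion S) : HMul.hMul (α := ZeroUnion S) (zuZ S) x = zuZ S := rfl

lemma zu_mul_none (x : ZeroUnion S) : HMul.hMul (α := ZeroUnion S) x (zuZ S) = zuZ S := by
  cases x <;> rfl

lemma zu_none_center : zuZ S ∈ sgCenter (ZeroUnion S) := by
  intro y; rw [zu_none_mul, zu_mul_none]

lemma zu_some_center_iff (i : Fin n) (a : S i) :
    zuE S i a ∈ sgCenter (ZeroUnion S) ↔ a ∈ sgCenter (S i) := by
  constructor
  · intro h b
    have := h (zuE S i b)
    rw [zu_mul_same, zu_mul_same] at this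
    exact zuE_injective i this
  · intro h y
    rcases zu_cases y with rfl | ⟨j, b, rfl⟩
    · rw [zu_none_mul, zu_mul_none]
    · rcases eq_or_ne j i with rfl | hji
      · rw [zu_mul_same, zu_mul_same, h b]
      · rw [zu_mul_ne hji, zu_mul_ne (Ne.symm hji)]

variable (S) in
/-- Embedding of the vertices of the component graphs into the vertices of the zero-union. -/
def zuEmb (p : Σ i, {x : S i // x ∉ sgCenter (S i)}) :
    {x : ZeroUnion S // x ∉ sgCenter (ZeroUnion S)} :=
  ⟨zuE S p.1 p.2.1, fun h => p.2.2 ((zu_some_center_iff p.1 p.2.1).mp h)⟩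

lemma zuEmb_injective : Function.Injective (zuEmb S) := by
  rintro ⟨i, a, ha⟩ ⟨j, b, hb⟩ h
  have h' : (some ⟨i, a⟩ : Option (Σ i, S i)) = some ⟨j, b⟩ := congrArg Subtype.val h
  simp only [Option.some.injEq, Sigma.mk.inj_iff] at h'
  obtain ⟨rfl, h2⟩ := h'
  simp_all

lemma zu_vertex_cases (x : {x : ZeroUnion S // x ∉ sgCenter (ZeroUnion S)}) :
    ∃ p, x = zuEmb S p := by
  obtain ⟨x, hx⟩ := x
  rcases zu_cases x with rfl | ⟨i, a, rfl⟩
  · exact absurd zu_none_center hx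
  · exact ⟨⟨i, ⟨a, fun h => hx ((zu_some_center_iff i a).mpr h)⟩⟩, rfl⟩

lemma zu_adj_same {i : Fin n} (a b : {x : S i // x ∉ sgCenter (S i)}) :
    (commGraph (ZeroUnion S)).Adj (zuEmb S ⟨i, a⟩) (zuEmb S ⟨i, b⟩)
      ↔ (commGraph (S i)).Adj a b := by
  constructor
  · rintro ⟨hne, hc⟩
    refine ⟨fun h => hne (by rw [h]), ?_⟩
    have : zuE S i (a.1 * b.1) = zuE S i (b.1 * a.1) := by
      rw [← zu_mul_same, ← zu_mul_same]; exact hc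
    exact zuE_injective i this
  · rintro ⟨hne, hc⟩
    refine ⟨fun h => hne ?_, ?_⟩
    · have := zuEmb_injective h
      simpa using this
    · show HMul.hMul (α := ZeroUnion S) (zuE S i a.1) (zuE S i b.1)
          = HMul.hMul (α := ZeroUnion S) (zuE S i b.1) (zuE S i a.1)
      rw [zu_mul_same, zu_mul_same, hc]

lemma zu_adj_ne {i j : Fin n} (hij : i ≠ j) (a : {x : S i // x ∉ sgCenter (S i)})
    (b : {x : S j // x ∉ sgCenter (S j)}) :
    (commGraph (ZeroUnion S)).Adj (zuEmb S ⟨i, a⟩) (zuEmb S ⟨j, b⟩) := by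
  refine ⟨fun h => zuE_ne_zuE hij a.1 b.1 (congrArg Subtype.val h), ?_⟩
  show HMul.hMul (α := ZeroUnion S) (zuE S i a.1) (zuE S j b.1)
      = HMul.hMul (α := ZeroUnion S) (zuE S j b.1) (zuE S i a.1)
  rw [zu_mul_ne (Ne.symm hij), zu_mul_ne hij]

noncomputable instance zuFintype [∀ i, Fintype (S i)] : Fintype (ZeroUnion S) := by
  classical exact inferInstanceAs (Fintype (Option (Σ i, S i)))

end Aux

theorem cliqueNum_commGraph_zeroUnion {n : ℕ} (S : Fin n → Type*)
    [∀ i, Semigroup (S i)] [∀ i, Fintype (S i)] [∀ i, Nonempty (S i)]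
    (NC : Finset (Fin n)) (hNC : ∀ i, i ∈ NC ↔ ¬ ∀ x y : S i, x * y = y * x)
    (h2 : 2 ≤ NC.card) :
    (commGraph (ZeroUnion S)).cliqueNum =
      ∑ i ∈ NC, (commGraph (S i)).cliqueNum := by
  classical
  haveI : ∀ i, Fintype {x : S i // x ∉ sgCenter (S i)} := fun i => Subtype.fintype _
  haveI : Fintype {x : ZeroUnion S // x ∉ sgCenter (ZeroUnion S)} := Subtype.fintype _
  refine le_antisymm ?_ ?_
  · -- upper bound
    obtain ⟨T, hT⟩ := (commGraph (ZeroUnion S)).exists_isNClique_cliqueNum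
    set u : ∀ i, Finset {x : S i // x ∉ sgCenter (S i)} :=
      fun i => Finset.univ.filter (fun a => zuEmb S ⟨i, a⟩ ∈ T) with hu
    have hTeq : T = ((Finset.univ : Finset (Fin n)).sigma (fun i => u i)).image (zuEmb S) := by
      ext x
      constructor
      · intro hx
        obtain ⟨⟨i, a⟩, rfl⟩ := zu_vertex_cases x
        exact Finset.mem_image.mpr ⟨⟨i, a⟩, by simp [hu, hx], rfl⟩
      · intro hx
        obtain ⟨⟨i, a⟩, hp, rfl⟩ := Finset.mem_image.mp hx
        have := (Finset.mem_sigma.mp hp).2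
        simpa [hu] using this
    have hcard : T.card = ∑ i, (u i).card := by
      rw [hTeq, Finset.card_image_of_injective _ zuEmb_injective, Finset.card_sigma]
    have hclique : ∀ i, (commGraph (S i)).IsClique (u i) := by
      intro i a ha b hb hab
      have ha' : zuEmb S ⟨i, a⟩ ∈ T := by simpa [hu] using ha
      have hb' : zuEmb S ⟨i, b⟩ ∈ T := by simpa [hu] using hb
      have hne : zuEmb S ⟨i, a⟩ ≠ zuEmb S ⟨i, b⟩ := by
        intro h
        have := zuEmb_injective h
        exact hab (by simpa using this)
      exact (zu_adj_same a b).mp (hT.1 ha' hb' hne)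
    have hzero : ∀ i ∉ NC, (u i).card = 0 := by
      intro i hi
      have hcomm : ∀ x y : S i, x * y = y * x := not_not.mp (fun h => hi ((hNC i).mpr h))
      rw [Finset.card_eq_zero]
      ext a
      simp only [Finset.notMem_empty, iff_false]
      intro _
      exact a.2 (fun y => hcomm a.1 y)
    calc (commGraph (ZeroUnion S)).cliqueNum = T.card := hT.2.symm
      _ = ∑ i, (u i).card := hcard
      _ = ∑ i ∈ NC, (u i).card :=
          (Finset.sum_subset (Finset.subset_univ NC) (fun i _ hi => hzero i hi)).symm
      _ ≤ ∑ i ∈ NC, (commGraph (S i)).cliqueNum :=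
          Finset.sum_le_sum (fun i _ =>
            SimpleGraph.IsClique.card_le_cliqueNum (tc := hclique i))
  · -- lower bound
    have ht : ∀ i, ∃ t, (commGraph (S i)).IsNClique ((commGraph (S i)).cliqueNum) t :=
      fun i => (commGraph (S i)).exists_isNClique_cliqueNum
    choose t hti using ht
    set T : Finset {x : ZeroUnion S // x ∉ sgCenter (ZeroUnion S)} :=
      (NC.sigma (fun i => t i)).image (zuEmb S) with hTdef
    have hcard : T.card = ∑ i ∈ NC, (commGraph (S i)).cliqueNum := by
      rw [hTdef, Finset.card_image_of_injective _ zuEmb_injective, Finset.card_sigma]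
      exact Finset.sum_congr rfl (fun i _ => (hti i).2)
    have hclique : (commGraph (ZeroUnion S)).IsClique T := by
      intro x hx y hy hxy
      obtain ⟨⟨i, a⟩, hpa, rfl⟩ := Finset.mem_image.mp hx
      obtain ⟨⟨j, b⟩, hpb, rfl⟩ := Finset.mem_image.mp hy
      rcases eq_or_ne i j with rfl | hij
      · have hab : a ≠ b := fun h => hxy (by rw [h])
        exact (zu_adj_same a b).mpr
          ((hti i).1 (Finset.mem_sigma.mp hpa).2 (Finset.mem_sigma.mp hpb).2 hab)
      · exact zu_adj_ne hij a b
    calc ∑ i ∈ NC, (commGraph (S i)).cliqueNum = T.card := hcard.symm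
      _ ≤ (commGraph (ZeroUnion S)).cliqueNum :=
          SimpleGraph.IsClique.card_le_cliqueNum (tc := hclique)
end

section
/- Let S = S₁ × ⋯ × Sₙ be a direct product of finite semigroups, with C the set of indices of commutative factors and NC the set of indices of non-commutative factors, and suppose NC ≠ ∅. Then ω(G(S)) = (∏_{i∈C} |Sᵢ|) · (∏_{i∈NC} (|Z(Sᵢ)| + ω(G(Sᵢ)))) − ∏_{i=1}^n |Z(Sᵢ)|. -/
open SimpleGraph

-- center of pi
lemma aux_center_pi {n : ℕ} {S : Fin n → Type*} [∀ i, Mul (S i)]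
    (x : ∀ i, S i) : x ∈ sgCenter (∀ i, S i) ↔ ∀ i, x i ∈ sgCenter (S i) := by
  constructor
  · intro h i b
    have := congrFun (h (Function.update x i b)) i
    simpa [Pi.mul_apply] using this
  · intro h y; funext i; exact h i (y i)

lemma aux_card_center {T : Type*} [Mul T] [Fintype T] [DecidablePred (· ∈ sgCenter T)] :
    Nat.card (sgCenter T) = (Finset.univ.filter (· ∈ sgCenter T)).card := by
  rw [Nat.card_eq_fintype_card]
  exact Fintype.card_subtype _

lemma aux_comm_card_le {T : Type*} [Mul T] [Fintype T]
    (B : Finset T) (hB : ∀ x ∈ B, ∀ y ∈ B, x * y = y * x) :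
    B.card ≤ Nat.card (sgCenter T) + (commGraph T).cliqueNum := by
  classical
  rw [← Finset.card_filter_add_card_filter_not (s := B) (p := (· ∈ sgCenter T))]
  gcongr
  · rw [aux_card_center]
    exact Finset.card_le_card (Finset.filter_subset_filter _ (Finset.subset_univ B))
  · set s : Finset {x : T // x ∉ sgCenter T} :=
      (B.filter (· ∉ sgCenter T)).subtype (· ∉ sgCenter T) with hs
    have hcard : s.card = (B.filter (· ∉ sgCenter T)).card := by
      rw [hs, Finset.card_subtype, Finset.filter_filter]
      congr 1
      apply Finset.filter_congr
      intro x hx; simp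
    have hclique : (commGraph T).IsClique s := by
      intro x hx y hy hne
      rw [Finset.mem_coe, hs, Finset.mem_subtype] at hx hy
      exact ⟨hne, hB x (Finset.mem_of_mem_filter _ hx) y (Finset.mem_of_mem_filter _ hy)⟩
    calc (B.filter (· ∉ sgCenter T)).card = s.card := hcard.symm
      _ ≤ (commGraph T).cliqueNum := hclique.card_le_cliqueNum

lemma aux_exists_comm {T : Type*} [Mul T] [Fintype T] :
    ∃ A : Finset T, (∀ x ∈ A, ∀ y ∈ A, x * y = y * x) ∧
      (∀ z, z ∈ sgCenter T → z ∈ A) ∧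
      A.card = Nat.card (sgCenter T) + (commGraph T).cliqueNum := by
  classical
  obtain ⟨K, hK⟩ := (commGraph T).exists_isNClique_cliqueNum
  refine ⟨Finset.univ.filter (· ∈ sgCenter T) ∪ K.image Subtype.val, ?_, ?_, ?_⟩
  · intro x hx y hy
    rcases Finset.mem_union.mp hx with hx | hx
    · exact (Finset.mem_filter.mp hx).2 y
    · rcases Finset.mem_union.mp hy with hy | hy
      · exact ((Finset.mem_filter.mp hy).2 x).symm
      · obtain ⟨a, ha, rfl⟩ := Finset.mem_image.mp hx
        obtain ⟨b, hb, rfl⟩ := Finset.mem_image.mp hy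
        by_cases hab : a = b
        · subst hab; rfl
        · exact (hK.isClique (Finset.mem_coe.mpr ha) (Finset.mem_coe.mpr hb) hab).2
  · intro z hz
    exact Finset.mem_union_left _ (Finset.mem_filter.mpr ⟨Finset.mem_univ z, hz⟩)
  · rw [Finset.card_union_of_disjoint, Finset.card_image_of_injective _ Subtype.coe_injective,
      hK.card_eq, aux_card_center]
    rw [Finset.disjoint_left]
    rintro x hx hx'
    obtain ⟨a, _, rfl⟩ := Finset.mem_image.mp hx'
    exact a.2 (Finset.mem_filter.mp hx).2

theorem cliqueNum_commGraph_pi {n : ℕ} (S : Fin n → Type*)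
    [∀ i, Semigroup (S i)] [∀ i, Fintype (S i)] [∀ i, Nonempty (S i)]
    (C NC : Finset (Fin n))
    (hC : ∀ i, i ∈ C ↔ ∀ x y : S i, x * y = y * x)
    (hNC : ∀ i, i ∈ NC ↔ ¬ ∀ x y : S i, x * y = y * x)
    (h : NC.Nonempty) :
    (commGraph (∀ i, S i)).cliqueNum =
      (∏ i ∈ C, Fintype.card (S i)) *
        (∏ i ∈ NC, (Nat.card (sgCenter (S i)) + (commGraph (S i)).cliqueNum)) -
      ∏ i : Fin n, Nat.card (sgCenter (S i)) := by
  classical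
  set T := ∀ i, S i with hT
  have hNCc : NC = Cᶜ := by
    ext i; rw [Finset.mem_compl, hC i, hNC i]
  -- per factor commuting sets
  choose A hAcomm hAsub hAcard using fun i => aux_exists_comm (T := S i)
  set A' : ∀ i, Finset (S i) := fun i => if i ∈ C then Finset.univ else A i with hA'
  have hA'comm : ∀ i, ∀ x ∈ A' i, ∀ y ∈ A' i, x * y = y * x := by
    intro i x hx y hy
    by_cases hi : i ∈ C
    · exact (hC i).mp hi x y
    · simp only [hA', if_neg hi] at hx hy
      exact hAcomm i x hx y hy
  have hA'sub : ∀ i, ∀ z, z ∈ sgCenter (S i) → z ∈ A' i := by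
    intro i z hz
    by_cases hi : i ∈ C <;> simp only [hA', if_pos, if_neg, hi]
    · exact Finset.mem_univ z
    · exact hAsub i z hz
  -- the value P
  have hP : ∏ i, (A' i).card =
      (∏ i ∈ C, Fintype.card (S i)) *
        (∏ i ∈ NC, (Nat.card (sgCenter (S i)) + (commGraph (S i)).cliqueNum)) := by
    rw [hNCc, ← Finset.prod_mul_prod_compl C]
    congr 1
    · apply Finset.prod_congr rfl
      intro i hi; simp [hA', if_pos hi]
    · apply Finset.prod_congr rfl
      intro i hi
      rw [Finset.mem_compl] at hi
      simp [hA', if_neg hi, hAcard i]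
  -- the central finsets
  set Zf : ∀ i, Finset (S i) := fun i => Finset.univ.filter (· ∈ sgCenter (S i)) with hZf
  have hZfcard : ∀ i, (Zf i).card = Nat.card (sgCenter (S i)) := fun i => (aux_card_center).symm
  set ZT : Finset T := Fintype.piFinset Zf with hZT
  have hZTmem : ∀ x : T, x ∈ ZT ↔ x ∈ sgCenter T := by
    intro x
    rw [hZT, Fintype.mem_piFinset, aux_center_pi]
    apply forall_congr'
    intro i
    simp [hZf]
  have hZTcard : ZT.card = ∏ i, Nat.card (sgCenter (S i)) := by
    rw [hZT, Fintype.card_piFinset]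
    exact Finset.prod_congr rfl fun i _ => hZfcard i
  -- lower bound
  set B : Finset T := Fintype.piFinset A' with hB
  have hBcomm : ∀ x ∈ B, ∀ y ∈ B, x * y = y * x := by
    intro x hx y hy
    funext i
    rw [Fintype.mem_piFinset] at hx hy
    exact hA'comm i _ (hx i) _ (hy i)
  have hZTB : ZT ⊆ B := by
    intro x hx
    rw [Fintype.mem_piFinset] at hx ⊢
    intro i
    exact hA'sub i _ (by simpa [hZf] using hx i)
  have hBcard : B.card = ∏ i, (A' i).card := Fintype.card_piFinset _
  have hlow : ∏ i, (A' i).card - ∏ i, Nat.card (sgCenter (S i)) ≤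
      (commGraph T).cliqueNum := by
    set s : Finset {x : T // x ∉ sgCenter T} := (B \ ZT).subtype (· ∉ sgCenter T) with hs
    have hmem : ∀ x ∈ B \ ZT, x ∉ sgCenter T := by
      intro x hx
      rw [Finset.mem_sdiff] at hx
      exact fun hc => hx.2 ((hZTmem x).mpr hc)
    have hscard : s.card = (B \ ZT).card := by
      rw [hs, Finset.card_subtype]
      congr 1
      apply Finset.filter_true_of_mem hmem
    have hclique : (commGraph T).IsClique s := by
      intro x hx y hy hne
      rw [Finset.mem_coe, hs, Finset.mem_subtype, Finset.mem_sdiff] at hx hy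
      exact ⟨hne, hBcomm x hx.1 y hy.1⟩
    have : (B \ ZT).card ≤ (commGraph T).cliqueNum := hscard ▸ hclique.card_le_cliqueNum
    rwa [Finset.card_sdiff_of_subset hZTB, hBcard, hZTcard] at this
  -- upper bound
  have hup : ∀ m : ℕ, (∃ s, (commGraph T).IsNClique m s) →
      m + ∏ i, Nat.card (sgCenter (S i)) ≤ ∏ i, (A' i).card := by
    intro m ⟨s, hsK⟩
    set D : Finset T := ZT ∪ s.image Subtype.val with hD
    have hDcomm : ∀ x ∈ D, ∀ y ∈ D, x * y = y * x := by
      intro x hx y hy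
      rcases Finset.mem_union.mp hx with hx | hx
      · exact (hZTmem x).mp hx y
      · rcases Finset.mem_union.mp hy with hy | hy
        · exact ((hZTmem y).mp hy x).symm
        · obtain ⟨a, ha, rfl⟩ := Finset.mem_image.mp hx
          obtain ⟨b, hb, rfl⟩ := Finset.mem_image.mp hy
          by_cases hab : a = b
          · subst hab; rfl
          · exact (hsK.isClique (Finset.mem_coe.mpr ha) (Finset.mem_coe.mpr hb) hab).2
    have hDcard : D.card = ∏ i, Nat.card (sgCenter (S i)) + m := by
      rw [hD, Finset.card_union_of_disjoint, Finset.card_image_of_injective _ Subtype.coe_injective,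
        hZTcard, hsK.card_eq]
      rw [Finset.disjoint_left]
      rintro x hx hx'
      obtain ⟨a, _, rfl⟩ := Finset.mem_image.mp hx'
      exact a.2 ((hZTmem _).mp hx)
    have hDsub : D ⊆ Fintype.piFinset (fun i => D.image (fun x => x i)) := by
      intro x hx
      rw [Fintype.mem_piFinset]
      intro i
      exact Finset.mem_image_of_mem _ hx
    have hfac : ∀ i, (D.image (fun x => x i)).card ≤ (A' i).card := by
      intro i
      show _ ≤ (if i ∈ C then Finset.univ else A i).card
      by_cases hi : i ∈ C
      · rw [if_pos hi]; exact Finset.card_le_univ _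
      · rw [if_neg hi, hAcard i]
        apply aux_comm_card_le
        intro a ha b hb
        obtain ⟨x, hx, rfl⟩ := Finset.mem_image.mp ha
        obtain ⟨y, hy, rfl⟩ := Finset.mem_image.mp hb
        exact congrFun (hDcomm x hx y hy) i
    calc m + ∏ i, Nat.card (sgCenter (S i)) = D.card := by rw [hDcard]; ring
      _ ≤ (Fintype.piFinset (fun i => D.image (fun x => x i))).card := Finset.card_le_card hDsub
      _ = ∏ i, (D.image (fun x => x i)).card := Fintype.card_piFinset _
      _ ≤ ∏ i, (A' i).card := Finset.prod_le_prod' fun i _ => hfac i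
  rw [← hP]
  apply le_antisymm
  · rw [show (commGraph T).cliqueNum = sSup {m | ∃ s, (commGraph T).IsNClique m s} from rfl]
    have h0 : (0 : ℕ) ∈ {m | ∃ s, (commGraph T).IsNClique m s} :=
      ⟨∅, SimpleGraph.isNClique_empty.mpr rfl⟩
    apply csSup_le ⟨0, h0⟩
    intro m hm
    exact Nat.le_sub_of_add_le (hup m hm)
  · exact hlow
end

section
/- Let S = S₁ × ⋯ × Sₙ be a direct product of finite semigroups, with C the indices of commutative factors and NC ≠ ∅ the indices of non-commutative factors. Then χ(G(S)) ≤ (∏_{i∈C} |Sᵢ|) · (∏_{i∈NC} (|Z(Sᵢ)| + χ(G(Sᵢ)))) − ∏_{i=1}^n |Z(Sᵢ)|. -/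
open SimpleGraph

open Classical in
/-- Combine the center tag with a coloring of the commuting graph. -/
noncomputable def centerSumColor {S : Type*} [Mul S] {α : Type*}
    (c : (commGraph S).Coloring α) (x : S) : ↥(sgCenter S) ⊕ α :=
  if h : x ∈ sgCenter S then .inl ⟨x, h⟩ else .inr (c ⟨x, h⟩)

lemma centerSumColor_inj {S : Type*} [Mul S] {α : Type*}
    (c : (commGraph S).Coloring α) {x y : S}
    (hcomm : x * y = y * x) (h : centerSumColor c x = centerSumColor c y) : x = y := by
  unfold centerSumColor at h
  by_cases hx : x ∈ sgCenter S <;> by_cases hy : y ∈ sgCenter S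
  · rw [dif_pos hx, dif_pos hy] at h
    exact congrArg Subtype.val (Sum.inl.inj h)
  · rw [dif_pos hx, dif_neg hy] at h
    exact absurd h (by simp)
  · rw [dif_neg hx, dif_pos hy] at h
    exact absurd h (by simp)
  · rw [dif_neg hx, dif_neg hy] at h
    by_contra hne
    have hadj : (commGraph S).Adj ⟨x, hx⟩ ⟨y, hy⟩ :=
      ⟨fun he => hne (congrArg Subtype.val he), hcomm⟩
    exact c.valid hadj (Sum.inr.inj h)

lemma centerSumColor_isLeft {S : Type*} [Mul S] {α : Type*}
    (c : (commGraph S).Coloring α) {x : S} :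
    (centerSumColor c x).isLeft = true ↔ x ∈ sgCenter S := by
  unfold centerSumColor
  split_ifs with h <;> simp [h]

/-- The subtype of left elements of a sum is equivalent to the left type. -/
def sumLeftEquiv (α β : Type*) : {s : α ⊕ β // s.isLeft = true} ≃ α where
  toFun s := s.1.getLeft s.2
  invFun a := ⟨.inl a, rfl⟩
  left_inv := by rintro ⟨(a | b), h⟩ <;> simp_all
  right_inv a := rfl

lemma sgCenter_pi_mem {n : ℕ} {S : Fin n → Type*} [∀ i, Mul (S i)] [∀ i, Nonempty (S i)]
    {x : ∀ i, S i} (hx : ∀ i, x i ∈ sgCenter (S i)) : x ∈ sgCenter (∀ i, S i) :=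
  fun y => funext fun i => hx i (y i)

theorem chromaticNumber_commGraph_pi_le {n : ℕ} (S : Fin n → Type*)
    [∀ i, Semigroup (S i)] [∀ i, Fintype (S i)] [∀ i, Nonempty (S i)]
    (C NC : Finset (Fin n))
    (hC : ∀ i, i ∈ C ↔ ∀ x y : S i, x * y = y * x)
    (hNC : ∀ i, i ∈ NC ↔ ¬ ∀ x y : S i, x * y = y * x)
    (h : NC.Nonempty) :
    (commGraph (∀ i, S i)).chromaticNumber ≤
      (∏ i ∈ C, (Fintype.card (S i) : ℕ∞)) *
        (∏ i ∈ NC, ((Nat.card (sgCenter (S i)) : ℕ∞) +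
          (commGraph (S i)).chromaticNumber)) -
      ∏ i : Fin n, (Nat.card (sgCenter (S i)) : ℕ∞) := by
  classical
  -- the per-factor number of colors
  set m : Fin n → ℕ := fun i => ((commGraph (S i)).chromaticNumber).toNat with hm
  have hcol : ∀ i, (commGraph (S i)).Colorable (m i) := fun i =>
    (commGraph (S i)).colorable_chromaticNumber_of_fintype
  let c : ∀ i, (commGraph (S i)).Coloring (Fin (m i)) := fun i => (hcol i).some
  -- the color type
  let K := ∀ i, (↥(sgCenter (S i)) ⊕ Fin (m i))
  let K' := {k : K // ¬ ∀ i, (k i).isLeft = true}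
  let f0 : (∀ i, S i) → K := fun x i => centerSumColor (c i) (x i)
  have hf0 : ∀ x : {x : ∀ i, S i // x ∉ sgCenter (∀ i, S i)},
      ¬ ∀ i, (f0 x.1 i).isLeft = true := by
    intro x hall
    exact x.2 (sgCenter_pi_mem fun i => (centerSumColor_isLeft (c i)).mp (hall i))
  -- the coloring
  let col : (commGraph (∀ i, S i)).Coloring K' :=
    SimpleGraph.Coloring.mk (fun x => ⟨f0 x.1, hf0 x⟩) (by
      rintro x y ⟨hne, hcomm⟩ heq
      apply hne
      apply Subtype.ext
      funext i
      have h1 : f0 x.1 i = f0 y.1 i := congrFun (congrArg Subtype.val heq) i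
      have h2 : x.1 i * y.1 i = y.1 i * x.1 i := congrFun hcomm i
      exact centerSumColor_inj (c i) h2 h1)
  haveI : Fintype K' := Fintype.ofFinite _
  refine le_trans col.colorable.chromaticNumber_le ?_
  -- cardinality computation
  have hcardK : Fintype.card K = ∏ i, (Nat.card (sgCenter (S i)) + m i) := by
    rw [Fintype.card_pi]
    refine Finset.prod_congr rfl fun i _ => ?_
    rw [Fintype.card_sum, Fintype.card_fin, Nat.card_eq_fintype_card]
  have hcardZ : Fintype.card {k : K // ∀ i, (k i).isLeft = true} =
      ∏ i, Nat.card (sgCenter (S i)) := by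
    rw [Fintype.card_congr (Equiv.subtypePiEquivPi.trans
      (Equiv.piCongrRight fun i => sumLeftEquiv _ _)), Fintype.card_pi]
    exact Finset.prod_congr rfl fun i _ => (Nat.card_eq_fintype_card).symm
  have hcard : Fintype.card K' =
      (∏ i, (Nat.card (sgCenter (S i)) + m i)) - ∏ i, Nat.card (sgCenter (S i)) := by
    rw [show Fintype.card K' = Fintype.card {k : K // ¬ ∀ i, (k i).isLeft = true} from
      Fintype.card_congr (Equiv.refl _), Fintype.card_subtype_compl, hcardK, hcardZ]
  rw [hcard, ENat.coe_sub]
  -- identify the two sides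
  have hchi_ne : ∀ i, (commGraph (S i)).chromaticNumber ≠ ⊤ := fun i =>
    ((hcol i).chromaticNumber_le.trans_lt (WithTop.coe_lt_top _)).ne
  have hmi : ∀ i, ((m i : ℕ) : ℕ∞) = (commGraph (S i)).chromaticNumber := fun i =>
    ENat.coe_toNat (hchi_ne i)
  have hNCeq : NC = Cᶜ := by
    ext i
    simp [hNC i, hC i, Finset.mem_compl]
  have hCc : ∀ i ∈ C, ((Nat.card (sgCenter (S i)) + m i : ℕ) : ℕ∞) =
      (Fintype.card (S i) : ℕ∞) := by
    intro i hi
    have hz : sgCenter (S i) = Set.univ :=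
      Set.eq_univ_of_forall fun x y => (hC i).mp hi x y
    haveI : IsEmpty {x : S i // x ∉ sgCenter (S i)} :=
      ⟨fun x => x.2 (Set.eq_univ_iff_forall.mp hz x.1)⟩
    have hm0 : m i = 0 := by
      rw [hm]
      simp [SimpleGraph.chromaticNumber_eq_zero_of_isEmpty]
    rw [hm0, hz, Nat.add_zero]
    congr 1
    rw [Nat.card_congr (Equiv.Set.univ _), Nat.card_eq_fintype_card]
  have hprod : (∏ i : Fin n, ((Nat.card (sgCenter (S i)) + m i : ℕ) : ℕ∞)) =
      (∏ i ∈ C, (Fintype.card (S i) : ℕ∞)) *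
        ∏ i ∈ NC, ((Nat.card (sgCenter (S i)) : ℕ∞) +
          (commGraph (S i)).chromaticNumber) := by
    rw [hNCeq, ← Finset.prod_mul_prod_compl C]
    congr 1
    · exact Finset.prod_congr rfl hCc
    · refine Finset.prod_congr rfl fun i _ => ?_
      rw [Nat.cast_add, hmi i]
  rw [Nat.cast_prod, Nat.cast_prod, hprod]
end
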